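/- Let p be a prime, H a finite p-group, and F_q a finite field of characteristic different from p. Suppose that whenever two F_q-colored Cayley digraphs cay(H,e) and cay(H,e') over H are isomorphic, some group automorphism of H is an isomorphism between them. Then for any two right ideals I, J of F_q[H] with J = I^g for some g ∈ Sym(H), there exists a group automorphism σ of H (acting as a permutation of H) with J = I^σ. -/

import Mathlib

/-- Convolution product on the group algebra `F[H]`. -/
def convolve {H F : Type*} [Group H] [Fintype H] [Field F] (f g : H → F) : H → F :=
  fun x => ∑ y : H, f y * g (y⁻¹ * x)

/-- Action of a permutation `g` on functions: `f^g (x) = f (x^{g⁻¹})`. -/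
def permAct {Ω F : Type*} (g : Equiv.Perm Ω) (f : Ω → F) : Ω → F :=
  fun x => f (g.symm x)

/-- `g` is an isomorphism from the colored Cayley digraph `cay(H,e)` to `cay(H,e')`. -/
def IsCayleyIso {H F : Type*} [Group H] (g : Equiv.Perm H) (e e' : H → F) : Prop :=
  ∀ x y : H, e' (g x * (g y)⁻¹) = e (x * y⁻¹)

/-- A submodule of `F[H]` is a right ideal if it is closed under right convolution. -/
def IsRightIdeal {H F : Type*} [Group H] [Fintype H] [Field F]
    (I : Submodule F (H → F)) : Prop :=
  ∀ a ∈ I, ∀ b : H → F, convolve a b ∈ I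

section Aux

lemma permAct_mul {Ω F : Type*} (a b : Equiv.Perm Ω) (f : Ω → F) :
    permAct (a * b) f = permAct a (permAct b f) := rfl

lemma permAct_one {Ω F : Type*} (f : Ω → F) : permAct (1 : Equiv.Perm Ω) f = f := rfl

lemma permAct_image_mul {Ω F : Type*} (a b : Equiv.Perm Ω) (K : Set (Ω → F)) :
    permAct (a * b) '' K = permAct a '' (permAct b '' K) := by
  rw [← Set.image_comp]; rfl

lemma permAct_image_one {Ω F : Type*} (K : Set (Ω → F)) :
    permAct (1 : Equiv.Perm Ω) '' K = K := by
  rw [show permAct (1 : Equiv.Perm Ω) = (id : (Ω → F) → (Ω → F)) from rfl, Set.image_id]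

lemma permAct_inv_image {Ω F : Type*} (a : Equiv.Perm Ω) {K L : Set (Ω → F)}
    (h : permAct a '' K = L) : permAct a⁻¹ '' L = K := by
  rw [← h, ← permAct_image_mul, inv_mul_cancel, permAct_image_one]

/-- right translations as a homomorphism into the symmetric group -/
def rho {H : Type*} [Group H] : H →* Equiv.Perm H where
  toFun h := Equiv.mulRight h⁻¹
  map_one' := by ext x; simp
  map_mul' a b := by ext x; simp [mul_assoc]

lemma permAct_rho {H F : Type*} [Group H] (h : H) (f : H → F) :
    permAct (rho h) f = fun x => f (x * h) := by
  ext x; simp [permAct, rho]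

/-- delta function -/
def delta {H F : Type*} [DecidableEq H] [Field F] (a : H) : H → F := Pi.single a 1

lemma convolve_delta {H F : Type*} [Group H] [Fintype H] [DecidableEq H] [Field F]
    (f : H → F) (a : H) : convolve f (delta a) = fun x => f (x * a⁻¹) := by
  ext x
  unfold convolve delta
  rw [Finset.sum_eq_single (x * a⁻¹)]
  · simp [Pi.single_apply, mul_assoc]
  · intro y _ hy
    have : y⁻¹ * x ≠ a := by
      intro hc
      apply hy
      rw [← hc]; group
    simp [Pi.single_apply, this]
  · simp

lemma translate_mem {H F : Type*} [Group H] [Fintype H] [DecidableEq H] [Field F]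
    {K : Submodule F (H → F)} (hK : IsRightIdeal K) {f : H → F} (hf : f ∈ K) (h : H) :
    permAct (rho h) f ∈ K := by
  rw [permAct_rho]
  have := hK f hf (delta h⁻¹)
  rwa [convolve_delta, inv_inv] at this

lemma translate_image {H F : Type*} [Group H] [Fintype H] [DecidableEq H] [Field F]
    {K : Submodule F (H → F)} (hK : IsRightIdeal K) (h : H) :
    permAct (rho h) '' (K : Set (H → F)) = K := by
  apply Set.Subset.antisymm
  · rintro _ ⟨f, hf, rfl⟩
    exact translate_mem hK hf h
  · intro f hf
    refine ⟨permAct (rho h)⁻¹ f, ?_, ?_⟩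
    · rw [← map_inv]; exact translate_mem hK hf h⁻¹
    · rw [← permAct_mul, mul_inv_cancel, permAct_one]

/-- permAct as a linear map -/
def permLin {H F : Type*} [Field F] (g : Equiv.Perm H) : (H → F) →ₗ[F] (H → F) where
  toFun := permAct g
  map_add' _ _ := rfl
  map_smul' _ _ := rfl

lemma sum_delta {H F : Type*} [Group H] [Fintype H] [DecidableEq H] [Field F] (f : H → F) :
    f = ∑ h : H, f h • delta h := by
  ext x
  simp [delta, Pi.single_apply]

lemma delta_translate {H F : Type*} [Group H] [Fintype H] [DecidableEq H] [Field F] (h : H) :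
    (delta h : H → F) = permAct (rho h⁻¹) (delta 1) := by
  ext x
  rw [permAct_rho]
  simp [delta, Pi.single_apply, mul_inv_eq_one]

end Aux

section Aux2

lemma exists_equivariant_proj {H F : Type*} [Group H] [Fintype H] [DecidableEq H] [Field F]
    (S₀ : Subgroup (Equiv.Perm H)) (hcard : (Nat.card S₀ : F) ≠ 0)
    (J : Submodule F (H → F)) (hSJ : ∀ s ∈ S₀, ∀ f ∈ J, permAct s f ∈ J) :
    ∃ π : (H → F) →ₗ[F] (H → F), (∀ f, π f ∈ J) ∧ (∀ f ∈ J, π f = f) ∧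
      (∀ s ∈ S₀, ∀ f, π (permAct s f) = permAct s (π f)) := by
  classical
  haveI : Fintype S₀ := Fintype.ofFinite _
  obtain ⟨C, hC⟩ := Submodule.exists_isCompl J
  set pr : (H → F) →ₗ[F] (H → F) := J.subtype ∘ₗ J.projectionOnto C hC with hprdef
  have hpr_mem : ∀ f, pr f ∈ J := fun f => (J.projectionOnto C hC f).2
  have hpr_fix : ∀ f ∈ J, pr f = f := by
    intro f hf
    have := Submodule.linearProjOfIsCompl_apply_left hC ⟨f, hf⟩
    simp only [hprdef, LinearMap.comp_apply, Submodule.coe_subtype]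
    rw [this]
  set c : F := (Nat.card S₀ : F)⁻¹ with hcdef
  set π : (H → F) →ₗ[F] (H → F) :=
    c • ∑ s : S₀, (permLin (↑s : Equiv.Perm H)) ∘ₗ pr ∘ₗ permLin ((↑s : Equiv.Perm H)⁻¹)
    with hπdef
  have happ : ∀ f, π f = c • ∑ s : S₀,
      permAct (↑s : Equiv.Perm H) (pr (permAct ((↑s : Equiv.Perm H)⁻¹) f)) := by
    intro f
    simp only [hπdef, LinearMap.smul_apply, LinearMap.sum_apply, LinearMap.comp_apply]
    rfl
  refine ⟨π, ?_, ?_, ?_⟩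
  · intro f
    rw [happ]
    refine Submodule.smul_mem _ _ (Submodule.sum_mem _ fun s _ => ?_)
    exact hSJ _ s.2 _ (hpr_mem _)
  · intro f hf
    rw [happ]
    have hterm : ∀ s : S₀,
        permAct (↑s : Equiv.Perm H) (pr (permAct ((↑s : Equiv.Perm H)⁻¹) f)) = f := by
      intro s
      rw [hpr_fix _ (hSJ _ (inv_mem s.2) _ hf), ← permAct_mul, mul_inv_cancel, permAct_one]
    rw [Finset.sum_congr rfl (fun s _ => hterm s), Finset.sum_const, Finset.card_univ]
    rw [← Nat.cast_smul_eq_nsmul F (Fintype.card S₀) f, smul_smul, hcdef,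
      Nat.card_eq_fintype_card, inv_mul_cancel₀, one_smul]
    rwa [Nat.card_eq_fintype_card] at hcard
  · intro t ht f
    rw [happ, happ]
    funext x
    show c * ((∑ s : S₀, permAct (↑s : Equiv.Perm H) (pr (permAct ((↑s : Equiv.Perm H)⁻¹) (permAct t f)))) x)
       = c * ((∑ u : S₀, permAct (↑u : Equiv.Perm H) (pr (permAct ((↑u : Equiv.Perm H)⁻¹) f))) (t.symm x))
    congr 1
    rw [Finset.sum_apply, Finset.sum_apply]
    refine Fintype.sum_equiv (Equiv.mulLeft ((⟨t, ht⟩ : S₀)⁻¹)) _ _ ?_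
    intro s
    show (pr (permAct ((↑s : Equiv.Perm H)⁻¹) (permAct t f))) ((↑s : Equiv.Perm H).symm x)
       = (pr (permAct ((↑(Equiv.mulLeft ((⟨t, ht⟩ : S₀)⁻¹) s) : Equiv.Perm H)⁻¹) f))
           ((↑(Equiv.mulLeft ((⟨t, ht⟩ : S₀)⁻¹) s) : Equiv.Perm H).symm (t.symm x))
    have hcoe : ((Equiv.mulLeft ((⟨t, ht⟩ : S₀)⁻¹) s : S₀) : Equiv.Perm H)
        = t⁻¹ * (↑s : Equiv.Perm H) := rfl
    rw [hcoe]
    have harg : permAct ((t⁻¹ * (↑s : Equiv.Perm H))⁻¹) f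
        = permAct ((↑s : Equiv.Perm H)⁻¹) (permAct t f) := by
      rw [← permAct_mul, mul_inv_rev, inv_inv]
    rw [harg]
    congr 1
    simp [← Equiv.Perm.inv_def, mul_inv_rev, inv_inv, Equiv.Perm.mul_apply]

lemma conv_form {H F : Type*} [Group H] [Fintype H] [DecidableEq H] [Field F]
    (T : (H → F) →ₗ[F] (H → F))
    (hT : ∀ h : H, ∀ f, T (permAct (rho h) f) = permAct (rho h) (T f)) (f : H → F) (x : H) :
    T f x = ∑ h : H, f h * (T (delta 1)) (x * h⁻¹) := by
  conv_lhs => rw [sum_delta f]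
  rw [map_sum]
  rw [Finset.sum_apply]
  refine Finset.sum_congr rfl fun h _ => ?_
  rw [map_smul]
  have : T (delta h) = fun z => (T (delta 1)) (z * h⁻¹) := by
    rw [delta_translate, hT, permAct_rho]
  rw [this]
  rfl

lemma entry_eq {H F : Type*} [Group H] [Fintype H] [DecidableEq H] [Field F]
    (T : (H → F) →ₗ[F] (H → F))
    (hT : ∀ h : H, ∀ f, T (permAct (rho h) f) = permAct (rho h) (T f)) (x y : H) :
    T (delta y) x = (T (delta 1)) (x * y⁻¹) := by
  rw [conv_form T hT, Finset.sum_eq_single y]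
  · simp [delta, Pi.single_apply]
  · intro h _ hh; simp [delta, Pi.single_apply, hh]
  · simp

end Aux2


/-- Let `p` be a prime, `H` a finite `p`-group and `F` a finite field
of characteristic different from `p`.  If any two isomorphic `F`-colored Cayley
digraphs over `H` are isomorphic via a group automorphism of `H`, then any two
permutation-equivalent right ideals of `F[H]` are equivalent via a group
automorphism of `H`. -/
theorem CI_colored_digraphs_implies_CI_codes_pgroup
    {p : ℕ} (hp : p.Prime)
    {H F : Type*} [Group H] [Fintype H] [DecidableEq H] (hH : IsPGroup p H)
    [Field F] [Fintype F] (hchar : ringChar F ≠ p)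
    (hCI : ∀ e e' : H → F, (∃ g : Equiv.Perm H, IsCayleyIso g e e') →
      ∃ σ : MulAut H, IsCayleyIso σ.toEquiv e e') :
    ∀ I J : Submodule F (H → F), IsRightIdeal I → IsRightIdeal J →
      (∃ g : Equiv.Perm H, (J : Set (H → F)) = permAct g '' (I : Set (H → F))) →
      ∃ σ : MulAut H, (J : Set (H → F)) = permAct σ.toEquiv '' (I : Set (H → F)) := by
  classical
  haveI := Fact.mk hp
  rintro I J hI hJ ⟨g, hg⟩
  -- the subgroup of Sym(H) stabilizing J
  set Gs : Subgroup (Equiv.Perm H) :=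
    { carrier := {s | permAct s '' (J : Set (H → F)) = (J : Set (H → F))}
      one_mem' := permAct_image_one _
      mul_mem' := by
        intro a b ha hb
        simp only [Set.mem_setOf_eq] at *
        rw [permAct_image_mul, hb, ha]
      inv_mem' := by
        intro a ha
        simp only [Set.mem_setOf_eq] at *
        exact permAct_inv_image a ha } with hGsdef
  have hGsmem : ∀ s : Equiv.Perm H,
      s ∈ Gs ↔ permAct s '' (J : Set (H → F)) = (J : Set (H → F)) := fun s => Iff.rfl
  have hgIJ : permAct g '' (I : Set (H → F)) = (J : Set (H → F)) := hg.symm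
  have hginvJI : permAct g⁻¹ '' (J : Set (H → F)) = (I : Set (H → F)) :=
    permAct_inv_image g hgIJ
  -- two p-subgroups of Gs
  have hrho_mem : ∀ h : H, rho h ∈ Gs := fun h => (hGsmem _).2 (translate_image hJ h)
  have hconj_mem : ∀ h : H, g * rho h * g⁻¹ ∈ Gs := by
    intro h
    rw [hGsmem, permAct_image_mul, permAct_image_mul, hginvJI, translate_image hI h, hgIJ]
  set ρ₁ : H →* Gs := (rho : H →* Equiv.Perm H).codRestrict Gs hrho_mem with hρ₁def
  set ρ₂ : H →* Gs :=
    (((MulAut.conj g).toMonoidHom.comp (rho : H →* Equiv.Perm H)).codRestrict Gs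
      (fun h => hconj_mem h)) with hρ₂def
  have hP₁ : IsPGroup p ρ₁.range := by
    rw [MonoidHom.range_eq_map]
    exact (hH.to_subgroup ⊤).map ρ₁
  have hP₂ : IsPGroup p ρ₂.range := by
    rw [MonoidHom.range_eq_map]
    exact (hH.to_subgroup ⊤).map ρ₂
  obtain ⟨S, hS⟩ := hP₁.exists_le_sylow
  obtain ⟨S', hS'⟩ := hP₂.exists_le_sylow
  obtain ⟨t, ht⟩ := MulAction.exists_smul_eq Gs S' S
  -- the common p-group S₀ and the adjusted permutation g'
  set S₀ : Subgroup (Equiv.Perm H) := Subgroup.map Gs.subtype (S : Subgroup Gs) with hS₀def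
  set g' : Equiv.Perm H := (t : Equiv.Perm H) * g with hg'def
  have hS₀J : ∀ s ∈ S₀, permAct s '' (J : Set (H → F)) = (J : Set (H → F)) := by
    rintro s ⟨u, hu, rfl⟩
    exact (hGsmem _).1 u.2
  have hrhoS₀ : ∀ h : H, rho h ∈ S₀ := by
    intro h
    exact ⟨ρ₁ h, hS ⟨h, rfl⟩, rfl⟩
  have hconjS₀ : ∀ h : H, g' * rho h * g'⁻¹ ∈ S₀ := by
    intro h
    have h1 : ρ₂ h ∈ (S' : Subgroup Gs) := hS' ⟨h, rfl⟩
    have h2 : t * ρ₂ h * t⁻¹ ∈ (S : Subgroup Gs) := by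
      rw [← ht, Sylow.coe_subgroup_smul]
      have := Subgroup.smul_mem_pointwise_smul (ρ₂ h) (MulAut.conj t) (S' : Subgroup Gs) h1
      simpa [MulAut.smul_def, MulAut.conj_apply, mul_assoc] using this
    refine ⟨t * ρ₂ h * t⁻¹, h2, ?_⟩
    have : (Gs.subtype) (t * ρ₂ h * t⁻¹) = (t : Equiv.Perm H) * (g * rho h * g⁻¹) * (t : Equiv.Perm H)⁻¹ := rfl
    rw [this, hg'def]
    group
  have hS₀p : IsPGroup p S₀ := S.isPGroup'.map Gs.subtype
  have hcard : (Nat.card S₀ : F) ≠ 0 := by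
    haveI : Fintype S₀ := Fintype.ofFinite _
    obtain ⟨n, hn⟩ := IsPGroup.iff_card.mp hS₀p
    rw [hn]
    intro h0
    have hdvd : ringChar F ∣ p ^ n := by
      have := (CharP.cast_eq_zero_iff F (ringChar F) (p ^ n)).1 (by exact_mod_cast h0)
      exact this
    have hrprime : (ringChar F).Prime := CharP.char_is_prime F (ringChar F)
    exact hchar ((Nat.prime_dvd_prime_iff_eq hrprime hp).1 (hrprime.dvd_of_dvd_pow hdvd))
  have hg'IJ : permAct g' '' (I : Set (H → F)) = (J : Set (H → F)) := by
    rw [hg'def, permAct_image_mul, hgIJ]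
    exact (hGsmem _).1 t.2
  have hg'invJI : permAct g'⁻¹ '' (J : Set (H → F)) = (I : Set (H → F)) :=
    permAct_inv_image g' hg'IJ
  have hIJ' : ∀ f ∈ I, permAct g' f ∈ J := by
    intro f hf
    have : permAct g' f ∈ (J : Set (H → F)) := by
      rw [← hg'IJ]; exact Set.mem_image_of_mem _ hf
    exact this
  have hJI' : ∀ f ∈ J, permAct g'⁻¹ f ∈ I := by
    intro f hf
    have : permAct g'⁻¹ f ∈ (I : Set (H → F)) := by
      rw [← hg'invJI]; exact Set.mem_image_of_mem _ hf
    exact this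
  -- the equivariant projection onto J
  obtain ⟨π, hπmem, hπfix, hπcomm⟩ := exists_equivariant_proj S₀ hcard J
    (fun s hs f hf => by
      have : permAct s f ∈ (J : Set (H → F)) := by
        rw [← hS₀J s hs]; exact Set.mem_image_of_mem _ hf
      exact this)
  -- the conjugated projection onto I
  set π₀ : (H → F) →ₗ[F] (H → F) := permLin g'⁻¹ ∘ₗ π ∘ₗ permLin g' with hπ₀def
  have hπ₀app : ∀ f, π₀ f = permAct g'⁻¹ (π (permAct g' f)) := fun f => rfl
  have hπ₀mem : ∀ f, π₀ f ∈ I := fun f => hJI' _ (hπmem _)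
  have hπ₀fix : ∀ f ∈ I, π₀ f = f := by
    intro f hf
    rw [hπ₀app, hπfix _ (hIJ' f hf), ← permAct_mul, inv_mul_cancel, permAct_one]
  have hπ₀comm : ∀ h : H, ∀ f, π₀ (permAct (rho h) f) = permAct (rho h) (π₀ f) := by
    intro h f
    rw [hπ₀app, hπ₀app]
    have e1 : permAct g' (permAct (rho h) f) = permAct (g' * rho h * g'⁻¹) (permAct g' f) := by
      rw [← permAct_mul, ← permAct_mul]; congr 1; group
    rw [e1, hπcomm _ (hconjS₀ h), ← permAct_mul, ← permAct_mul]
    congr 1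
    group
  have hπcommrho : ∀ h : H, ∀ f, π (permAct (rho h) f) = permAct (rho h) (π f) :=
    fun h f => hπcomm _ (hrhoS₀ h) f
  -- colorings
  set e : H → F := π₀ (delta 1) with hedef
  set e' : H → F := π (delta 1) with he'def
  -- the Cayley isomorphism between e' and e
  have key1 : IsCayleyIso g'⁻¹ e' e := by
    intro x y
    have h1 : π (delta y) x = e' (x * y⁻¹) := entry_eq π hπcommrho x y
    have h2 : permAct g' (delta (g'.symm y) : H → F) = delta y := by
      funext z
      simp only [permAct, delta]
      simp [Pi.single_apply]
    have h3 : π₀ (delta (g'.symm y)) (g'.symm x) = e (g'.symm x * (g'.symm y)⁻¹) :=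
      entry_eq π₀ hπ₀comm _ _
    have h4 : π₀ (delta (g'.symm y)) (g'.symm x) = π (delta y) x := by
      rw [hπ₀app, h2]
      show π (delta y) ((g'⁻¹).symm (g'.symm x)) = π (delta y) x
      congr 1
      simp [Equiv.Perm.inv_def]
    show e (g'⁻¹ x * (g'⁻¹ y)⁻¹) = e' (x * y⁻¹)
    rw [← h1, ← h4, h3]
    rfl
  obtain ⟨σ, hσ⟩ := hCI e' e ⟨g'⁻¹, key1⟩
  -- transfer the projection relation through σ
  set s : Equiv.Perm H := σ.toEquiv with hsdef
  have cf : ∀ f x, π f x = ∑ h : H, f h * e' (x * h⁻¹) :=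
    fun f x => conv_form π hπcommrho f x
  have cf0 : ∀ f x, π₀ f x = ∑ h : H, f h * e (x * h⁻¹) :=
    fun f x => conv_form π₀ hπ₀comm f x
  have claim : ∀ f x, π f x = π₀ (permAct s f) (s x) := by
    intro f x
    rw [cf f x, cf0 (permAct s f) (s x)]
    refine Fintype.sum_equiv s (fun u => f u * e' (x * u⁻¹))
      (fun h => permAct s f h * e (s x * h⁻¹)) ?_
    intro u
    show f u * e' (x * u⁻¹) = permAct s f (s u) * e (s x * (s u)⁻¹)
    rw [show permAct s f (s u) = f (s.symm (s u)) from rfl, Equiv.symm_apply_apply]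
    rw [← hσ x u]
  refine ⟨σ⁻¹, ?_⟩
  apply Set.Subset.antisymm
  · intro v hv
    refine ⟨π₀ (permAct s v), hπ₀mem _, ?_⟩
    funext x
    show (π₀ (permAct s v)) (((σ⁻¹ : MulAut H).toEquiv).symm x) = v x
    have hpt : ((σ⁻¹ : MulAut H).toEquiv).symm x = s x := rfl
    rw [hpt, ← claim v x, hπfix v hv]
  · rintro _ ⟨w, hw, rfl⟩
    set v : H → F := permAct (σ⁻¹ : MulAut H).toEquiv w with hvdef
    have hsv : permAct s v = w := by
      funext u
      show w (s (s.symm u)) = w u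
      rw [Equiv.apply_symm_apply]
    have hfix : π v = v := by
      funext x
      rw [claim v x, hsv, hπ₀fix w hw]
      rfl
    show v ∈ (J : Set (H → F))
    exact hfix ▸ hπmem v
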